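/- For an inner product right D-module H_D with H-action, the covariance condition g ▷ ⟨x, y⟩ = ⟨S(g₍₁₎)* ▷ x, g₍₂₎ ▷ y⟩ is equivalent to the condition ⟨x, g ▷ y⟩ = g₍₂₎ ▷ ⟨g₍₁₎* ▷ x, y⟩ for all x, y and g ∈ H. -/
import Mathlib


open scoped TensorProduct

/-- A choice of a finite "Sweedler representation" of the comultiplication:
`Δ g = ∑ₚ p.1 ⊗ p.2` where `p` ranges over the list `rep g`. -/
structure SweedlerRep (C H : Type*) [CommSemiring C] [AddCommMonoid H] [Module C H]
    [CoalgebraStruct C H] where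
  rep : H → List (H × H)
  rep_spec : ∀ g : H,
    Coalgebra.comul (R := C) g = ((rep g).map fun p => p.1 ⊗ₜ[C] p.2).sum


open TensorProduct in
lemma sweedler_key {C H M : Type*} [CommRing C] [Ring H] [HopfAlgebra C H]
    [AddCommGroup M] [Module C M]
    (Δ : SweedlerRep C H) (B : H →ₗ[C] H →ₗ[C] M)
    (ν : H ⊗[C] H →ₗ[C] H)
    (hν : ν ∘ₗ Coalgebra.comul = Algebra.linearMap C H ∘ₗ Coalgebra.counit)
    (g : H) :
    ((Δ.rep g).map fun p =>
      ((Δ.rep p.2).map fun q => B (ν (p.1 ⊗ₜ[C] q.1)) q.2).sum).sum = B 1 g := by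
  set Φ : H ⊗[C] (H ⊗[C] H) →ₗ[C] M :=
    (TensorProduct.lift B) ∘ₗ ν.rTensor H ∘ₗ (TensorProduct.assoc C H H H).symm.toLinearMap
    with hΦdef
  have hΦ : ∀ (a b c : H), Φ (a ⊗ₜ[C] (b ⊗ₜ[C] c)) = B (ν (a ⊗ₜ[C] b)) c := by
    intro a b c
    simp [hΦdef]
  have h1 : ((Δ.rep g).map fun p =>
      ((Δ.rep p.2).map fun q => B (ν (p.1 ⊗ₜ[C] q.1)) q.2).sum).sum
      = Φ ((Coalgebra.comul (R := C)).lTensor H (Coalgebra.comul (R := C) g)) := by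
    rw [Δ.rep_spec g, map_list_sum, List.map_map, map_list_sum, List.map_map]
    congr 1
    apply List.map_congr_left
    intro p _
    simp only [Function.comp_apply, LinearMap.lTensor_tmul]
    rw [← TensorProduct.mk_apply (p.1) (Coalgebra.comul (R := C) p.2),
      Δ.rep_spec p.2, map_list_sum, List.map_map, map_list_sum, List.map_map]
    apply congrArg
    apply List.map_congr_left
    intro q _
    simp only [Function.comp_apply, TensorProduct.mk_apply, hΦ]
  rw [h1, ← Coalgebra.coassoc_apply]
  have h3 : ∀ z : (H ⊗[C] H) ⊗[C] H,
      Φ ((TensorProduct.assoc C H H H) z) = TensorProduct.lift B (ν.rTensor H z) := by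
    intro z
    simp [hΦdef]
  rw [h3,
    ← LinearMap.comp_apply (LinearMap.rTensor H ν) (LinearMap.rTensor H Coalgebra.comul),
    ← LinearMap.rTensor_comp, hν, LinearMap.rTensor_comp, LinearMap.comp_apply,
    Coalgebra.rTensor_counit_comul]
  simp

/-- For an inner product right `D`-module with `H`-action, the covariance
condition `g ▷ ⟨x,y⟩ = ⟨S(g₍₁₎)* ▷ x, g₍₂₎ ▷ y⟩` is equivalent to
`⟨x, g ▷ y⟩ = g₍₂₎ ▷ ⟨g₍₁₎* ▷ x, y⟩`. -/
theorem covariance_iff_niceCovariance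
    {C H D E : Type*} [CommRing C] [StarRing C]
    [Ring H] [HopfAlgebra C H] [StarRing H] [StarModule C H]
    [Ring D] [Algebra C D] [StarRing D] [StarModule C D]
    [AddCommGroup E] [Module C E]
    (Δ : SweedlerRep C H)
    -- Hopf `*`-algebra conditions
    (hcomul_star : ∀ g : H, Coalgebra.comul (R := C) (star g)
      = ((Δ.rep g).map fun p => star p.1 ⊗ₜ[C] star p.2).sum)
    (hcounit_star : ∀ g : H,
      Coalgebra.counit (R := C) (star g) = star (Coalgebra.counit (R := C) g))
    (hS : ∀ g : H,
      star (HopfAlgebra.antipode (R := C)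
        (star (HopfAlgebra.antipode (R := C) g))) = g)
    -- `actD` is a `*`-action of `H` on the `*`-algebra `D`
    (actD : H → D → D)
    (hactD_one : ∀ d, actD 1 d = d)
    (hactD_mulH : ∀ g h d, actD (g * h) d = actD g (actD h d))
    (hactD_lin : ∀ d, IsLinearMap C fun g => actD g d)
    (hactD_linD : ∀ g, IsLinearMap C (actD g))
    (hactD_alg : ∀ g d d', actD g (d * d') =
      ((Δ.rep g).map fun p => actD p.1 d * actD p.2 d').sum)
    (hactD_star : ∀ g d, star (actD g d) =
      actD (star (HopfAlgebra.antipode (R := C) g)) (star d))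
    -- `E` is a right `D`-module via `rmul`
    (rmul : E → D → E)
    (hrmul_one : ∀ x, rmul x 1 = x)
    (hrmul_mul : ∀ x d d', rmul x (d * d') = rmul (rmul x d) d')
    (hrmul_addE : ∀ x x' d, rmul (x + x') d = rmul x d + rmul x' d)
    (hrmul_addD : ∀ x d d', rmul x (d + d') = rmul x d + rmul x d')
    (hrmul_smul : ∀ (c : C) x d, rmul (c • x) d = c • rmul x d)
    (hrmul_smulD : ∀ (c : C) x d, rmul x (c • d) = c • rmul x d)
    -- `ip` is a sesquilinear `D`-valued inner product on `E`
    (ip : E → E → D)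
    (hip_addl : ∀ x x' y, ip (x + x') y = ip x y + ip x' y)
    (hip_addr : ∀ x y y', ip x (y + y') = ip x y + ip x y')
    (hip_smull : ∀ (c : C) x y, ip (c • x) y = star c • ip x y)
    (hip_smulr : ∀ (c : C) x y, ip x (c • y) = c • ip x y)
    (hip_rmul : ∀ x y d, ip x (rmul y d) = ip x y * d)
    (hip_star : ∀ x y, star (ip x y) = ip y x)
    -- `hE` is an `H`-module structure on `E` ...
    (hE : H → E → E)
    (hE_one : ∀ x, hE 1 x = x)
    (hE_mulH : ∀ g h x, hE (g * h) x = hE g (hE h x))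
    (hE_lin : ∀ x, IsLinearMap C fun g => hE g x)
    (hE_linE : ∀ g, IsLinearMap C (hE g))
    -- ... compatible with the right `D`-module structure:
    -- `g ▷ (x·d) = (g₍₁₎ ▷ x)·(g₍₂₎ ▷ d)`
    (hE_compat : ∀ g x d, hE g (rmul x d) =
      ((Δ.rep g).map fun p => rmul (hE p.1 x) (actD p.2 d)).sum) :
    -- `g ▷ ⟨x,y⟩ = ⟨S(g₍₁₎)* ▷ x, g₍₂₎ ▷ y⟩`
    (∀ (g : H) (x y : E), actD g (ip x y) =
      ((Δ.rep g).map fun p =>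
        ip (hE (star (HopfAlgebra.antipode (R := C) p.1)) x) (hE p.2 y)).sum)
    ↔
    -- `⟨x, g ▷ y⟩ = g₍₂₎ ▷ ⟨g₍₁₎* ▷ x, y⟩`
    (∀ (g : H) (x y : E), ip x (hE g y) =
      ((Δ.rep g).map fun p => actD p.2 (ip (hE (star p.1) x) y)).sum) := by
  constructor
  · intro hcov g x y
    have hkey := sweedler_key Δ
      (LinearMap.mk₂ C (fun u c => ip (hE (star u) x) (hE c y))
        (fun u u' c => by simp only [star_add, (hE_lin x).map_add, hip_addl])
        (fun r u c => by simp only [star_smul, (hE_lin x).map_smul, hip_smull, star_star])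
        (fun u c c' => by simp only [(hE_lin y).map_add, hip_addr])
        (fun r u c => by simp only [(hE_lin y).map_smul, hip_smulr]))
      (LinearMap.mul' C H ∘ₗ (HopfAlgebra.antipode (R := C) (A := H)).lTensor H)
      HopfAlgebra.mul_antipode_lTensor_comul g
    simp only [LinearMap.mk₂_apply, LinearMap.comp_apply, LinearMap.lTensor_tmul,
      LinearMap.mul'_apply, star_mul, star_one, hE_mulH, hE_one] at hkey
    simp only [hcov]
    exact hkey.symm
  · intro hnice g x y
    have hkey := sweedler_key Δ
      (LinearMap.mk₂ C (fun u c => actD c (ip (hE (star u) x) y))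
        (fun u u' c => by
          simp only [star_add, (hE_lin x).map_add, hip_addl, (hactD_linD c).map_add])
        (fun r u c => by
          simp only [star_smul, (hE_lin x).map_smul, hip_smull, star_star, (hactD_linD c).map_smul])
        (fun u c c' => by simp only [(hactD_lin _).map_add])
        (fun r u c => by simp only [(hactD_lin _).map_smul]))
      (LinearMap.mul' C H ∘ₗ (HopfAlgebra.antipode (R := C) (A := H)).rTensor H)
      HopfAlgebra.mul_antipode_rTensor_comul g
    simp only [LinearMap.mk₂_apply, LinearMap.comp_apply, LinearMap.rTensor_tmul,
      LinearMap.mul'_apply, star_mul, star_one, hE_mulH, hE_one] at hkey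
    simp only [hnice]
    exact hkey.symm
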